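/- arXiv:2104.04096 — 4 statements merged into one kernel-verified Lean document; each statement's English description precedes it below -/
import Mathlib

section
/- Let H be a real inner product space, K a linear subspace of H, and Π : H → H a linear map whose range is contained in K and which satisfies Π p = p for every p ∈ K. Assume in addition that there is a constant C > 0 with ‖Π v‖ ≤ C‖v‖ for all v ∈ H, and that S : H × H → ℝ is a bilinear form for which there exist constants 0 < s_* ≤ s^* with s_*‖w‖² ≤ S(w,w) ≤ s^*‖w‖² for every w in the kernel of Π. Define ⟨u,v⟩_h := ⟨Π u, Π v⟩ + S(u − Π u, v − Π v). Then for every v ∈ H, (1/(2·max(1, 1/s_*)))‖v‖² ≤ ⟨v,v⟩_h ≤ (C² + s^*(1+C)²)‖v‖²; in particular the discrete bilinear form is equivalent to the squared norm with constants depending only on C, s_* and s^*. -/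
open scoped InnerProductSpace

set_option maxHeartbeats 1000000 in
/-- Stability of the projection-based virtual element inner product:
if the reconstruction operator `Π` has range in `K`, fixes `K`, and is bounded
by `C`, and the stabilization `S` is spectrally equivalent to the squared norm
on the kernel of `Π` with constants `0 < s_* ≤ s^*`, then the discrete bilinear
form `⟨v,v⟩_h = ‖Πv‖² + S(v - Πv, v - Πv)` is equivalent to `‖v‖²`. -/
theorem vem_inner_product_stability
    {H : Type*} [NormedAddCommGroup H] [InnerProductSpace ℝ H]
    (K : Submodule ℝ H) (Pi : H →ₗ[ℝ] H)
    (hrange : LinearMap.range Pi ≤ K)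
    (hproj : ∀ p ∈ K, Pi p = p)
    (C : ℝ) (hC : 0 < C)
    (hbound : ∀ v : H, ‖Pi v‖ ≤ C * ‖v‖)
    (S : H →ₗ[ℝ] H →ₗ[ℝ] ℝ)
    (sStar sSup : ℝ) (hs0 : 0 < sStar) (hss : sStar ≤ sSup)
    (hS : ∀ w ∈ LinearMap.ker Pi,
      sStar * ‖w‖ ^ 2 ≤ S w w ∧ S w w ≤ sSup * ‖w‖ ^ 2) :
    ∀ v : H,
      (1 / (2 * max 1 (1 / sStar))) * ‖v‖ ^ 2
          ≤ ⟪Pi v, Pi v⟫_ℝ + S (v - Pi v) (v - Pi v) ∧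
      ⟪Pi v, Pi v⟫_ℝ + S (v - Pi v) (v - Pi v)
          ≤ (C ^ 2 + sSup * (1 + C) ^ 2) * ‖v‖ ^ 2 := by
  intro v
  set w := v - Pi v with hwdef
  have hPiv : Pi (Pi v) = Pi v := hproj _ (hrange ⟨v, rfl⟩)
  have hwker : w ∈ LinearMap.ker Pi := by
    simp [hwdef, LinearMap.mem_ker, map_sub, hPiv]
  obtain ⟨hSlo, hShi⟩ := hS w hwker
  have hinner : ⟪Pi v, Pi v⟫_ℝ = ‖Pi v‖ ^ 2 := real_inner_self_eq_norm_sq _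
  have hA : (0:ℝ) ≤ ‖Pi v‖ ^ 2 := sq_nonneg _
  have hwn : (0:ℝ) ≤ ‖w‖ ^ 2 := sq_nonneg _
  have hB : (0:ℝ) ≤ S w w := le_trans (by positivity) hSlo
  have hPib : ‖Pi v‖ ≤ C * ‖v‖ := hbound v
  have hvnn : (0:ℝ) ≤ ‖v‖ := norm_nonneg _
  have hPinn : (0:ℝ) ≤ ‖Pi v‖ := norm_nonneg _
  have hwb : ‖w‖ ≤ (1 + C) * ‖v‖ := by
    calc ‖w‖ ≤ ‖v‖ + ‖Pi v‖ := norm_sub_le _ _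
    _ ≤ ‖v‖ + C * ‖v‖ := by linarith
    _ = (1 + C) * ‖v‖ := by ring
  have hvb : ‖v‖ ≤ ‖Pi v‖ + ‖w‖ := by
    calc ‖v‖ = ‖Pi v + w‖ := by rw [hwdef]; congr 1; abel
    _ ≤ ‖Pi v‖ + ‖w‖ := norm_add_le _ _
  set M := max 1 (1 / sStar) with hM
  have hM1 : (1:ℝ) ≤ M := le_max_left _ _
  have hM2 : 1 / sStar ≤ M := le_max_right _ _
  have hM0 : (0:ℝ) < M := lt_of_lt_of_le one_pos hM1
  constructor
  · rw [hinner]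
    rw [div_mul_eq_mul_div, one_mul, div_le_iff₀ (by positivity)]
    have hv2 : ‖v‖ * ‖v‖ ≤ (‖Pi v‖ + ‖w‖) * (‖Pi v‖ + ‖w‖) :=
      mul_self_le_mul_self hvnn hvb
    have h1 : ‖v‖ ^ 2 ≤ 2 * ‖Pi v‖ ^ 2 + 2 * ‖w‖ ^ 2 := by
      nlinarith [sq_nonneg (‖Pi v‖ - ‖w‖)]
    have h2 : ‖w‖ ^ 2 ≤ (1 / sStar) * S w w := by
      rw [div_mul_eq_mul_div, le_div_iff₀ hs0]
      nlinarith
    nlinarith [mul_le_mul_of_nonneg_right hM2 hB]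
  · rw [hinner]
    have h3 : S w w ≤ sSup * ((1 + C) * ‖v‖) ^ 2 := by
      refine hShi.trans ?_
      have h4 : ‖w‖ ^ 2 ≤ ((1 + C) * ‖v‖) ^ 2 := by
        nlinarith [mul_self_le_mul_self (norm_nonneg w) hwb]
      have hsSup : (0:ℝ) ≤ sSup := le_trans hs0.le hss
      nlinarith [mul_le_mul_of_nonneg_left h4 hsSup]
    have hPi2 : ‖Pi v‖ ^ 2 ≤ C ^ 2 * ‖v‖ ^ 2 := by
      nlinarith [mul_self_le_mul_self hPinn hPib]
    calc ‖Pi v‖ ^ 2 + S w w ≤ C ^ 2 * ‖v‖ ^ 2 + sSup * ((1 + C) * ‖v‖) ^ 2 :=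
          add_le_add hPi2 h3
      _ = (C ^ 2 + sSup * (1 + C) ^ 2) * ‖v‖ ^ 2 := by ring
end

section
/- Let U and P be real Hilbert spaces, and let a : U × U → ℝ and b : U × P → ℝ be bounded bilinear forms. Set U₀ = {u ∈ U : b(u,q) = 0 for all q ∈ P}. Assume there exist constants α > 0 and β > 0 such that (i) for every u ∈ U₀, sup over nonzero v ∈ U₀ of a(u,v)/‖v‖ is at least α‖u‖; (ii) for every v ∈ U₀, sup over nonzero u ∈ U₀ of a(u,v)/‖u‖ is at least α‖v‖; and (iii) for every p ∈ P, sup over nonzero u ∈ U of b(u,p)/‖u‖ is at least β‖p‖. Then for every pair of bounded linear functionals f on U and g on P there exist unique u ∈ U and p ∈ P such that a(u,v) − b(v,p) = f(v) for all v ∈ U and b(u,q) = g(q) for all q ∈ P; moreover there is a constant C > 0, depending only on α, β and the continuity bounds of a and b, such that ‖u‖ + ‖p‖ ≤ C(‖f‖_{U'} + ‖g‖_{P'}). -/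
open ContinuousLinearMap Submodule InnerProductSpace
open scoped RealInnerProductSpace

section Helpers

variable {E F : Type*}
  [NormedAddCommGroup E] [InnerProductSpace ℝ E] [CompleteSpace E]
  [NormedAddCommGroup F] [InnerProductSpace ℝ F] [CompleteSpace F]

/-- A bounded-below operator between Hilbert spaces has closed range equal to the
orthogonal complement of the kernel of its adjoint. -/
lemma brezzi_range_eq_orth_ker_adjoint (T : E →L[ℝ] F) {c : ℝ} (hc : 0 < c)
    (h1 : ∀ x, c * ‖x‖ ≤ ‖T x‖) :
    LinearMap.range (T : E →ₗ[ℝ] F) = (LinearMap.ker (ContinuousLinearMap.adjoint T : F →ₗ[ℝ] E))ᗮ := by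
  have hanti : AntilipschitzWith (⟨c⁻¹, by positivity⟩ : NNReal) T := by
    apply T.antilipschitz_of_bound
    intro x
    have h := h1 x
    have : ‖x‖ ≤ c⁻¹ * ‖T x‖ := by
      rw [le_inv_mul_iff₀ hc]; exact h
    exact this
  have hclosed : IsClosed (LinearMap.range (T : E →ₗ[ℝ] F) : Set F) := by
    have := hanti.isClosed_range T.uniformContinuous
    convert this using 1
    exact LinearMap.coe_range _
  have horth : (LinearMap.range (T : E →ₗ[ℝ] F))ᗮ = LinearMap.ker (ContinuousLinearMap.adjoint T : F →ₗ[ℝ] E) := by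
    ext y
    simp only [Submodule.mem_orthogonal, LinearMap.mem_range, LinearMap.mem_ker,
      forall_exists_index, ContinuousLinearMap.coe_coe]
    constructor
    · intro h
      apply ext_inner_right ℝ
      intro x
      rw [ContinuousLinearMap.adjoint_inner_left]
      rw [real_inner_comm]
      simpa using h (T x) x rfl
    · rintro h x u rfl
      rw [real_inner_comm, ← ContinuousLinearMap.adjoint_inner_left, h, inner_zero_left]
  haveI : CompleteSpace (LinearMap.range (T : E →ₗ[ℝ] F)) := hclosed.completeSpace_coe
  rw [← horth, Submodule.orthogonal_orthogonal]

/-- A bounded-below operator whose adjoint is injective is surjective. -/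
lemma brezzi_surjective (T : E →L[ℝ] F) {c : ℝ} (hc : 0 < c)
    (h1 : ∀ x, c * ‖x‖ ≤ ‖T x‖)
    (h2 : ∀ y, ContinuousLinearMap.adjoint T y = 0 → y = 0) :
    ∀ y : F, ∃ x : E, T x = y := by
  intro y
  have hr : LinearMap.range (T : E →ₗ[ℝ] F) = ⊤ := by
    rw [brezzi_range_eq_orth_ker_adjoint T hc h1]
    have : LinearMap.ker (ContinuousLinearMap.adjoint T : F →ₗ[ℝ] E) = ⊥ := by
      ext z; simp only [LinearMap.mem_ker, Submodule.mem_bot]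
      exact ⟨h2 z, fun h => by simp [h]⟩
    rw [this, Submodule.bot_orthogonal_eq_top]
  have : y ∈ LinearMap.range (T : E →ₗ[ℝ] F) := by rw [hr]; trivial
  exact this

/-- The Riesz map associated to a continuous bilinear form. -/
noncomputable def brezziRiesz (Bc : E →L[ℝ] (F →L[ℝ] ℝ)) : E →L[ℝ] F :=
  ContinuousLinearMap.comp
    ((toDual ℝ F).symm.toContinuousLinearEquiv.toContinuousLinearMap) Bc

@[simp] lemma brezziRiesz_apply (Bc : E →L[ℝ] (F →L[ℝ] ℝ)) (u : E) (q : F) :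
    ⟪brezziRiesz Bc u, q⟫ = Bc u q := by
  simp [brezziRiesz, toDual_symm_apply]

/-- Bounding a supremum of ratios. -/
lemma brezzi_ciSup_le {G : Type*} [NormedAddCommGroup G] {ι : Sort*} [Nonempty ι]
    (x : ι → G) (s : ι → ℝ) (M : ℝ) (hM : 0 ≤ M) (h : ∀ i, s i ≤ M * ‖x i‖) :
    (⨆ i, s i / ‖x i‖) ≤ M := by
  refine ciSup_le fun i => ?_
  rcases eq_or_ne (x i) 0 with hx | hx
  · simp [hx, hM]
  · rw [div_le_iff₀ (norm_pos_iff.mpr hx)]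
    linarith [h i]

end Helpers

set_option maxHeartbeats 1000000

/-- Brezzi's theorem on the well-posedness of saddle-point problems. Let `U`, `P`
be real Hilbert spaces, `a`, `b` bounded bilinear forms, `U₀` the kernel of `b`
in the first slot. If `a` satisfies both inf-sup conditions on `U₀` with constant
`α > 0` and `b` satisfies the inf-sup condition with constant `β > 0`, then for
all bounded linear functionals `f`, `g` the saddle-point problem has a unique
solution `(u, p)`, which depends continuously on the data with a constant
depending only on `α`, `β` and the continuity bounds of `a` and `b`. -/
theorem brezzi_saddle_point_well_posedness
    {U P : Type*}
    [NormedAddCommGroup U] [InnerProductSpace ℝ U] [CompleteSpace U]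
    [NormedAddCommGroup P] [InnerProductSpace ℝ P] [CompleteSpace P]
    (a : U →ₗ[ℝ] U →ₗ[ℝ] ℝ) (b : U →ₗ[ℝ] P →ₗ[ℝ] ℝ)
    (Ca Cb : ℝ)
    (ha_bdd : ∀ u v : U, |a u v| ≤ Ca * ‖u‖ * ‖v‖)
    (hb_bdd : ∀ (u : U) (q : P), |b u q| ≤ Cb * ‖u‖ * ‖q‖)
    (U₀ : Set U) (hU₀ : U₀ = {u : U | ∀ q : P, b u q = 0})
    (α β : ℝ) (hα : 0 < α) (hβ : 0 < β)
    (hinfsup1 : ∀ u ∈ U₀, α * ‖u‖ ≤ ⨆ v : U₀, a u (v : U) / ‖(v : U)‖)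
    (hinfsup2 : ∀ v ∈ U₀, α * ‖v‖ ≤ ⨆ u : U₀, a (u : U) v / ‖(u : U)‖)
    (hinfsupb : ∀ p : P, β * ‖p‖ ≤ ⨆ u : U, b u p / ‖u‖) :
    (∀ (f : U →L[ℝ] ℝ) (g : P →L[ℝ] ℝ),
      ∃! up : U × P,
        (∀ v : U, a up.1 v - b v up.2 = f v) ∧ (∀ q : P, b up.1 q = g q)) ∧
    ∃ C : ℝ, 0 < C ∧
      ∀ (f : U →L[ℝ] ℝ) (g : P →L[ℝ] ℝ) (u : U) (p : P),
        (∀ v : U, a u v - b v p = f v) → (∀ q : P, b u q = g q) →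
        ‖u‖ + ‖p‖ ≤ C * (‖f‖ + ‖g‖) := by
  classical
  -- nonnegative continuity constants
  obtain ⟨Ca', hCa', ha'⟩ : ∃ Ca' : ℝ, 0 ≤ Ca' ∧ ∀ u v : U, |a u v| ≤ Ca' * ‖u‖ * ‖v‖ := by
    refine ⟨max Ca 0, le_max_right _ _, fun u v => (ha_bdd u v).trans ?_⟩
    have h1 : Ca ≤ max Ca 0 := le_max_left _ _
    have h2 : Ca * (‖u‖ * ‖v‖) ≤ max Ca 0 * (‖u‖ * ‖v‖) :=
      mul_le_mul_of_nonneg_right h1 (by positivity)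
    nlinarith [h2]
  obtain ⟨Cb', hCb', hb'⟩ : ∃ Cb' : ℝ, 0 ≤ Cb' ∧ ∀ (u : U) (q : P), |b u q| ≤ Cb' * ‖u‖ * ‖q‖ := by
    refine ⟨max Cb 0, le_max_right _ _, fun u q => (hb_bdd u q).trans ?_⟩
    have h1 : Cb ≤ max Cb 0 := le_max_left _ _
    have h2 : Cb * (‖u‖ * ‖q‖) ≤ max Cb 0 * (‖u‖ * ‖q‖) :=
      mul_le_mul_of_nonneg_right h1 (by positivity)
    nlinarith [h2]
  -- Riesz representation operators
  obtain ⟨A', hA'⟩ : ∃ A' : U →L[ℝ] U, ∀ u v : U, ⟪A' u, v⟫ = a u v :=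
    ⟨brezziRiesz (LinearMap.mkContinuous₂ a Ca'
        (fun u v => by simpa [Real.norm_eq_abs] using ha' u v)),
      fun u v => brezziRiesz_apply _ u v⟩
  obtain ⟨B', hB'⟩ : ∃ B' : U →L[ℝ] P, ∀ (u : U) (q : P), ⟪B' u, q⟫ = b u q :=
    ⟨brezziRiesz (LinearMap.mkContinuous₂ b Cb'
        (fun u q => by simpa [Real.norm_eq_abs] using hb' u q)),
      fun u q => brezziRiesz_apply _ u q⟩
  obtain ⟨Bt, hBt, hBtadj⟩ : ∃ Bt : P →L[ℝ] U,
      (∀ (v : U) (q : P), ⟪v, Bt q⟫ = b v q) ∧ ContinuousLinearMap.adjoint Bt = B' := by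
    refine ⟨ContinuousLinearMap.adjoint B', fun v q => ?_, ContinuousLinearMap.adjoint_adjoint B'⟩
    rw [real_inner_comm, ContinuousLinearMap.adjoint_inner_left, real_inner_comm, hB']
  have hB'adj : ContinuousLinearMap.adjoint B' = Bt := by
    rw [← hBtadj, ContinuousLinearMap.adjoint_adjoint]
  -- the kernel
  obtain ⟨K, hKdef⟩ : ∃ K : Submodule ℝ U, K = LinearMap.ker (B' : U →ₗ[ℝ] P) := ⟨_, rfl⟩
  have hKmem : ∀ u : U, u ∈ K ↔ ∀ q : P, b u q = 0 := by
    intro u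
    rw [hKdef]
    constructor
    · intro h q
      rw [← hB', show B' u = 0 from LinearMap.mem_ker.1 h, inner_zero_left]
    · intro h
      have h0 : ⟪B' u, B' u⟫ = 0 := by rw [hB']; exact h _
      exact LinearMap.mem_ker.2 (inner_self_eq_zero.1 h0)
  have hmemiff : ∀ u : U, u ∈ U₀ ↔ u ∈ K := by
    intro u; rw [hU₀, Set.mem_setOf_eq]; exact (hKmem u).symm
  haveI : Nonempty ↥U₀ := ⟨⟨0, by rw [hU₀]; simp⟩⟩
  haveI hKcomplete : CompleteSpace K := by
    rw [hKdef]; exact B'.isClosed_ker.completeSpace_coe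
  -- the adjoint of B' is bounded below
  have hBtlow : ∀ p : P, β * ‖p‖ ≤ ‖Bt p‖ := by
    intro p
    refine (hinfsupb p).trans ?_
    refine brezzi_ciSup_le (fun u : U => u) (fun u : U => b u p) _ (norm_nonneg _) ?_
    intro u
    show b u p ≤ ‖Bt p‖ * ‖u‖
    rw [← hBt]
    exact (real_inner_le_norm u (Bt p)).trans (by rw [mul_comm])
  have hrangeBt : LinearMap.range (Bt : P →ₗ[ℝ] U) = Kᗮ := by
    have h := brezzi_range_eq_orth_ker_adjoint Bt hβ hBtlow
    rwa [hBtadj, ← hKdef] at h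
  -- stability constants
  obtain ⟨C1, hC1def⟩ : ∃ C1 : ℝ, C1 = α⁻¹ + (α⁻¹ * Ca' + 1) * β⁻¹ := ⟨_, rfl⟩
  have hC1pos : 0 < C1 := by rw [hC1def]; positivity
  obtain ⟨C, hCdef⟩ : ∃ C : ℝ, C = C1 + β⁻¹ * (Ca' * C1 + 1) := ⟨_, rfl⟩
  have hCpos : 0 < C := by
    rw [hCdef]
    have : 0 ≤ β⁻¹ * (Ca' * C1 + 1) := by positivity
    linarith
  -- stability estimate
  have hstab : ∀ (f : U →L[ℝ] ℝ) (g : P →L[ℝ] ℝ) (u : U) (p : P),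
      (∀ v : U, a u v - b v p = f v) → (∀ q : P, b u q = g q) →
      ‖u‖ + ‖p‖ ≤ C * (‖f‖ + ‖g‖) := by
    intro f g u p hf hg
    -- decompose u
    obtain ⟨u₀, w, hu₀K, hwmem, huw⟩ :
        ∃ u₀ w : U, u₀ ∈ K ∧ w ∈ Kᗮ ∧ u = u₀ + w :=
      ⟨orthogonalProjection K u, u - orthogonalProjection K u,
        (orthogonalProjection K u).2,
        Submodule.sub_starProjection_mem_orthogonal u, by abel⟩
    -- bound on w
    obtain ⟨z, hz⟩ : ∃ z : P, Bt z = w := by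
      rw [← hrangeBt] at hwmem; exact LinearMap.mem_range.1 hwmem
    have hzw : β * ‖z‖ ≤ ‖w‖ := by rw [← hz]; exact hBtlow z
    have hw2 : ‖w‖ ^ 2 ≤ ‖g‖ * ‖z‖ := by
      have h1 : ⟪w, w⟫ = b w z := by rw [← hBt w z, hz]
      have h2 : b w z = g z := by
        have h3 : b u z - b u₀ z = b w z := by
          rw [huw]; simp [map_add, LinearMap.add_apply]
        rw [← h3, hg z, (hKmem u₀).1 hu₀K z, sub_zero]
      have h3 : g z ≤ ‖g‖ * ‖z‖ := by
        have := g.le_opNorm z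
        rw [Real.norm_eq_abs] at this
        exact (le_abs_self _).trans this
      calc ‖w‖ ^ 2 = ⟪w, w⟫ := by rw [real_inner_self_eq_norm_sq]
        _ = g z := by rw [h1, h2]
        _ ≤ ‖g‖ * ‖z‖ := h3
    have hwbound : β * ‖w‖ ≤ ‖g‖ := by
      rcases eq_or_lt_of_le (norm_nonneg w) with h0 | h0
      · rw [← h0, mul_zero]; exact norm_nonneg g
      · nlinarith [norm_nonneg z, norm_nonneg g]
    -- bound on u₀
    have hu₀bound : α * ‖u₀‖ ≤ ‖f‖ + Ca' * ‖w‖ := by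
      refine (hinfsup1 u₀ ((hmemiff u₀).2 hu₀K)).trans ?_
      refine brezzi_ciSup_le (fun v : ↥U₀ => (v : U)) (fun v : ↥U₀ => a u₀ v) _ ?_ ?_
      · positivity
      · rintro ⟨v, hv⟩
        show a u₀ v ≤ (‖f‖ + Ca' * ‖w‖) * ‖v‖
        have hbvp : b v p = 0 := by rw [hU₀] at hv; exact hv p
        have hav : a u₀ v = f v - a w v := by
          have h1 : a u v - a w v = a u₀ v := by
            rw [huw]; simp [map_add, LinearMap.add_apply]
          have h2 : a u v = f v := by
            have := hf v; rw [hbvp, sub_zero] at this; exact this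
          rw [← h1, h2]
        have h3 : f v ≤ ‖f‖ * ‖v‖ := by
          have := f.le_opNorm v
          rw [Real.norm_eq_abs] at this
          exact (le_abs_self _).trans this
        have h4 : -(Ca' * ‖w‖ * ‖v‖) ≤ a w v := by
          have := ha' w v
          rw [abs_le] at this
          exact this.1
        rw [hav]
        nlinarith [norm_nonneg (v : U)]
    -- bound on u
    have hu_le : ‖u‖ ≤ ‖u₀‖ + ‖w‖ := by rw [huw]; exact norm_add_le _ _
    have hufinal : ‖u‖ ≤ C1 * (‖f‖ + ‖g‖) := by
      have h1 : ‖u₀‖ ≤ α⁻¹ * (‖f‖ + Ca' * ‖w‖) := by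
        rw [le_inv_mul_iff₀ hα]; exact hu₀bound
      have h2 : ‖w‖ ≤ β⁻¹ * ‖g‖ := by
        rw [le_inv_mul_iff₀ hβ]; exact hwbound
      rw [hC1def]
      have hαi : (0:ℝ) ≤ α⁻¹ := by positivity
      have hβi : (0:ℝ) ≤ β⁻¹ := by positivity
      linarith [mul_le_mul_of_nonneg_left h2 (by positivity : (0:ℝ) ≤ α⁻¹ * Ca' + 1),
        mul_nonneg hαi (norm_nonneg g),
        mul_nonneg (mul_nonneg (mul_nonneg hαi hCa') hβi) (norm_nonneg f),
        mul_nonneg hβi (norm_nonneg f)]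
    -- bound on p
    have hpbound : β * ‖p‖ ≤ Ca' * ‖u‖ + ‖f‖ := by
      refine (hinfsupb p).trans ?_
      refine brezzi_ciSup_le (fun v : U => v) (fun v : U => b v p) _ ?_ ?_
      · positivity
      · intro v
        show b v p ≤ (Ca' * ‖u‖ + ‖f‖) * ‖v‖
        have h1 : b v p = a u v - f v := by
          have := hf v; linarith
        have h2 : a u v ≤ Ca' * ‖u‖ * ‖v‖ := (le_abs_self _).trans (ha' u v)
        have h3 : -(‖f‖ * ‖v‖) ≤ f v := by
          have := f.le_opNorm v
          rw [Real.norm_eq_abs, abs_le] at this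
          exact this.1
        rw [h1]
        nlinarith [norm_nonneg v]
    have hpfinal : ‖p‖ ≤ β⁻¹ * (Ca' * (C1 * (‖f‖ + ‖g‖)) + ‖f‖) := by
      rw [le_inv_mul_iff₀ hβ]
      refine hpbound.trans ?_
      nlinarith [mul_le_mul_of_nonneg_left hufinal hCa']
    rw [hCdef]
    have hβi : (0:ℝ) ≤ β⁻¹ := by positivity
    linarith [hufinal, hpfinal, mul_nonneg hβi (norm_nonneg g)]
  refine ⟨?_, C, hCpos, hstab⟩
  -- existence and uniqueness
  intro f g
  -- the operator on the kernel
  obtain ⟨A₀, hA₀app⟩ : ∃ A₀ : K →L[ℝ] K, ∀ x y : K, ⟪A₀ x, y⟫ = a (x : U) (y : U) := by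
    refine ⟨(orthogonalProjection K).comp (A'.comp K.subtypeL), fun x y => ?_⟩
    simp only [ContinuousLinearMap.coe_comp', Function.comp_apply, Submodule.coe_subtypeL',
      Submodule.coe_subtype]
    rw [Submodule.coe_inner]
    have h : ⟪A' (x : U) - ((orthogonalProjection K) (A' (x : U)) : U), (y : U)⟫ = 0 :=
      Submodule.starProjection_inner_eq_zero (A' (x : U)) (y : U) y.2
    rw [inner_sub_left] at h
    have h2 : ⟪((orthogonalProjection K) (A' (x:U)) : U), (y:U)⟫ = ⟪A' (x:U), (y:U)⟫ := by
      linarith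
    rw [h2, hA']
  have hA₀low : ∀ x : K, α * ‖x‖ ≤ ‖A₀ x‖ := by
    intro x
    have hxU₀ : (x : U) ∈ U₀ := (hmemiff _).2 x.2
    have h1 := hinfsup1 (x : U) hxU₀
    rw [Submodule.norm_coe] at h1
    refine h1.trans ?_
    refine brezzi_ciSup_le (fun v : ↥U₀ => (v : U)) (fun v : ↥U₀ => a (x:U) v) _
      (norm_nonneg _) ?_
    rintro ⟨v, hv⟩
    show a (x : U) v ≤ ‖A₀ x‖ * ‖v‖
    have hvK : v ∈ K := (hmemiff v).1 hv
    have he : a (x : U) v = ⟪A₀ x, (⟨v, hvK⟩ : K)⟫ := (hA₀app x ⟨v, hvK⟩).symm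
    rw [he]
    refine (real_inner_le_norm _ _).trans ?_
    exact le_of_eq rfl
  have hA₀adjlow : ∀ y : K, α * ‖y‖ ≤ ‖ContinuousLinearMap.adjoint A₀ y‖ := by
    intro y
    have hyU₀ : (y : U) ∈ U₀ := (hmemiff _).2 y.2
    have h1 := hinfsup2 (y : U) hyU₀
    rw [Submodule.norm_coe] at h1
    refine h1.trans ?_
    refine brezzi_ciSup_le (fun u : ↥U₀ => (u : U)) (fun u : ↥U₀ => a (u:U) (y:U)) _
      (norm_nonneg _) ?_
    rintro ⟨v, hv⟩
    show a v (y : U) ≤ ‖ContinuousLinearMap.adjoint A₀ y‖ * ‖v‖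
    have hvK : v ∈ K := (hmemiff v).1 hv
    have h2 : a v (y : U) = ⟪(⟨v, hvK⟩ : K), ContinuousLinearMap.adjoint A₀ y⟫ := by
      rw [ContinuousLinearMap.adjoint_inner_right, hA₀app]
    rw [h2, real_inner_comm]
    refine (real_inner_le_norm _ _).trans ?_
    have hnorm : ‖(⟨v, hvK⟩ : K)‖ = ‖v‖ := rfl
    rw [hnorm, mul_comm]
  -- surjectivity of A₀
  have hA₀surj : ∀ y : K, ∃ x : K, A₀ x = y := by
    refine brezzi_surjective A₀ hα hA₀low ?_
    intro y hy
    have h := hA₀adjlow y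
    rw [hy, norm_zero] at h
    have h2 : ‖y‖ ≤ 0 := by nlinarith
    exact norm_le_zero_iff.1 h2
  -- surjectivity of B' ∘ Bt
  obtain ⟨T, hTdef⟩ : ∃ T : P →L[ℝ] P, T = B'.comp Bt := ⟨_, rfl⟩
  have hTadj : ContinuousLinearMap.adjoint T = T := by
    rw [hTdef, ContinuousLinearMap.adjoint_comp, hBtadj, hB'adj]
  have hTapp : ∀ p : P, T p = B' (Bt p) := by
    intro p; rw [hTdef]; rfl
  have hTlow : ∀ p : P, (β * β) * ‖p‖ ≤ ‖T p‖ := by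
    intro p
    have h1 : ⟪Bt p, Bt p⟫ = ⟪T p, p⟫ := by
      rw [hTapp, hB', ← hBt (Bt p) p]
    have h2 : ‖Bt p‖ ^ 2 ≤ ‖T p‖ * ‖p‖ := by
      rw [← real_inner_self_eq_norm_sq, h1]
      exact real_inner_le_norm _ _
    have h3 := hBtlow p
    rcases eq_or_lt_of_le (norm_nonneg p) with h0 | h0
    · rw [← h0, mul_zero]; exact norm_nonneg _
    · have key : (β * β * ‖p‖) * ‖p‖ ≤ ‖T p‖ * ‖p‖ := by
        calc (β * β * ‖p‖) * ‖p‖ = (β * ‖p‖) * (β * ‖p‖) := by ring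
          _ ≤ ‖Bt p‖ * ‖Bt p‖ := mul_le_mul h3 h3 (by positivity) (norm_nonneg _)
          _ = ‖Bt p‖ ^ 2 := by ring
          _ ≤ ‖T p‖ * ‖p‖ := h2
      exact le_of_mul_le_mul_right key h0
  have hTsurj : ∀ y : P, ∃ z : P, T z = y := by
    refine brezzi_surjective T (by positivity) hTlow ?_
    intro y hy
    have h := hTlow y
    rw [hTadj] at hy
    rw [hy, norm_zero] at h
    have hyn : ‖y‖ ≤ 0 := by
      by_contra hc
      push_neg at hc
      nlinarith [mul_pos (mul_pos hβ hβ) hc]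
    exact norm_le_zero_iff.1 hyn
  -- Riesz representatives of the data
  obtain ⟨fstar, hfstar⟩ : ∃ fstar : U, ∀ v : U, ⟪fstar, v⟫ = f v :=
    ⟨(toDual ℝ U).symm f, fun v => toDual_symm_apply⟩
  obtain ⟨gstar, hgstar⟩ : ∃ gstar : P, ∀ q : P, ⟪gstar, q⟫ = g q :=
    ⟨(toDual ℝ P).symm g, fun q => toDual_symm_apply⟩
  -- construct the solution
  obtain ⟨z, hz⟩ := hTsurj gstar
  have hwsol : ∀ q : P, b (Bt z) q = g q := by
    intro q
    rw [← hB', ← hTapp, hz, hgstar]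
  -- the projected right-hand side for the kernel problem
  obtain ⟨y₀, hy₀⟩ : ∃ y₀ : K, ∀ v : K, ⟪y₀, v⟫ = ⟪fstar - A' (Bt z), (v : U)⟫ := by
    refine ⟨orthogonalProjection K (fstar - A' (Bt z)), fun v => ?_⟩
    rw [Submodule.coe_inner]
    have h : ⟪(fstar - A' (Bt z)) - ((orthogonalProjection K) (fstar - A' (Bt z)) : U), (v : U)⟫ = 0 :=
      Submodule.starProjection_inner_eq_zero (fstar - A' (Bt z)) (v : U) v.2
    rw [inner_sub_left] at h
    linarith
  obtain ⟨x₀, hx₀⟩ := hA₀surj y₀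
  -- the solution pair
  have hbu : ∀ q : P, b ((x₀ : U) + Bt z) q = g q := by
    intro q
    have h1 : b (x₀ : U) q = 0 := (hKmem _).1 x₀.2 q
    simp only [map_add, LinearMap.add_apply]
    rw [h1, hwsol q, zero_add]
  have hauv : ∀ v : U, v ∈ K → a ((x₀ : U) + Bt z) v = f v := by
    intro v hvK
    have h1 : a (x₀ : U) v = ⟪A₀ x₀, (⟨v, hvK⟩ : K)⟫ := (hA₀app x₀ ⟨v, hvK⟩).symm
    have h2 : ⟪A₀ x₀, (⟨v, hvK⟩ : K)⟫ = ⟪fstar - A' (Bt z), v⟫ := by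
      rw [hx₀]; exact hy₀ ⟨v, hvK⟩
    have h3 : ⟪fstar - A' (Bt z), v⟫ = f v - a (Bt z) v := by
      rw [inner_sub_left, hfstar, hA']
    have h4 : a ((x₀ : U) + Bt z) v = a (x₀ : U) v + a (Bt z) v := by
      simp [map_add, LinearMap.add_apply]
    rw [h4, h1, h2, h3]; ring
  -- recover the pressure
  have hrK : A' ((x₀ : U) + Bt z) - fstar ∈ Kᗮ := by
    rw [Submodule.mem_orthogonal]
    intro v hvK
    rw [real_inner_comm, inner_sub_left, hA', hfstar, hauv v hvK]
    ring
  obtain ⟨p, hp⟩ : ∃ p : P, Bt p = A' ((x₀ : U) + Bt z) - fstar := by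
    rw [← hrangeBt] at hrK; exact LinearMap.mem_range.1 hrK
  have hsol1 : ∀ v : U, a ((x₀ : U) + Bt z) v - b v p = f v := by
    intro v
    have hbvP : b v p = ⟪v, Bt p⟫ := (hBt v p).symm
    rw [hbvP, hp, inner_sub_right]
    have e1 : ⟪v, A' ((x₀ : U) + Bt z)⟫ = a ((x₀ : U) + Bt z) v := by
      rw [real_inner_comm]; exact hA' _ _
    have e2 : ⟪v, fstar⟫ = f v := by rw [real_inner_comm]; exact hfstar v
    rw [e1, e2]; ring
  refine ⟨((x₀ : U) + Bt z, p), ⟨hsol1, hbu⟩, ?_⟩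
  -- uniqueness
  rintro ⟨u', p'⟩ ⟨hsol1', hbu'⟩
  have hdiff1 : ∀ v : U, a (u' - ((x₀ : U) + Bt z)) v - b v (p' - p) = (0 : U →L[ℝ] ℝ) v := by
    intro v
    have h1 := hsol1 v
    have h2 := hsol1' v
    simp only [map_sub, LinearMap.sub_apply, ContinuousLinearMap.zero_apply]
    linarith
  have hdiff2 : ∀ q : P, b (u' - ((x₀ : U) + Bt z)) q = (0 : P →L[ℝ] ℝ) q := by
    intro q
    have h1 := hbu q
    have h2 := hbu' q
    simp only [map_sub, LinearMap.sub_apply, ContinuousLinearMap.zero_apply]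
    linarith
  have hzero := hstab 0 0 (u' - ((x₀ : U) + Bt z)) (p' - p) hdiff1 hdiff2
  rw [norm_zero, norm_zero, add_zero, mul_zero] at hzero
  have hu0 : u' - ((x₀ : U) + Bt z) = 0 := by
    have h1 : ‖u' - ((x₀ : U) + Bt z)‖ = 0 :=
      le_antisymm (by linarith [norm_nonneg (p' - p)]) (norm_nonneg _)
    exact norm_eq_zero.1 h1
  have hp0 : p' - p = 0 := by
    have h1 : ‖p' - p‖ = 0 :=
      le_antisymm (by linarith [norm_nonneg (u' - ((x₀ : U) + Bt z))]) (norm_nonneg _)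
    exact norm_eq_zero.1 h1
  have heq1 : u' = (x₀ : U) + Bt z := by rwa [sub_eq_zero] at hu0
  have heq2 : p' = p := by rwa [sub_eq_zero] at hp0
  simp [heq1, heq2]
end

section
/- Let V, W and Z be real vector spaces, and let rot : V → W and div : W → Z be linear maps satisfying div ∘ rot = 0. Let V_h ⊆ V and W_h ⊆ W be subspaces with rot(V_h) ⊆ W_h, and let I_V : V → V and I_W : W → W be linear maps such that: the range of I_V is contained in V_h; I_W w = w for every w ∈ W_h; and I_W (rot v) = rot (I_V v) for every v ∈ V (the commuting property). Assume moreover the exactness of the continuous chain: every w ∈ W with div w = 0 is of the form rot v for some v ∈ V. Then the discrete chain is exact: {w ∈ W_h : div w = 0} = rot(V_h), i.e. rot(V_h) equals the kernel of div restricted to W_h. -/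
/-- Abstract exactness of the discrete de Rham chain. If `div ∘ rot = 0`,
`rot` maps `V_h` into `W_h`, interpolation operators `I_V`, `I_W` satisfy
`range I_V ⊆ V_h`, `I_W` fixes `W_h`, and `I_W ∘ rot = rot ∘ I_V` (the commuting
property), and the continuous chain is exact (every divergence-free `w` is a
curl), then the discrete chain is exact:
`{w ∈ W_h : div w = 0} = rot(V_h)`. -/
theorem discrete_deRham_exactness
    {V W Z : Type*}
    [AddCommGroup V] [Module ℝ V]
    [AddCommGroup W] [Module ℝ W]
    [AddCommGroup Z] [Module ℝ Z]
    (rot : V →ₗ[ℝ] W) (div : W →ₗ[ℝ] Z)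
    (hdivrot : ∀ v : V, div (rot v) = 0)
    (Vh : Submodule ℝ V) (Wh : Submodule ℝ W)
    (hrotVh : Submodule.map rot Vh ≤ Wh)
    (IV : V →ₗ[ℝ] V) (IW : W →ₗ[ℝ] W)
    (hIVrange : LinearMap.range IV ≤ Vh)
    (hIWfix : ∀ w ∈ Wh, IW w = w)
    (hcomm : ∀ v : V, IW (rot v) = rot (IV v))
    (hexact : ∀ w : W, div w = 0 → ∃ v : V, rot v = w) :
    {w : W | w ∈ Wh ∧ div w = 0} = (rot '' (Vh : Set V)) := by
  ext w
  constructor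
  · rintro ⟨hwWh, hwdiv⟩
    obtain ⟨v, hv⟩ := hexact w hwdiv
    refine ⟨IV v, hIVrange ⟨v, rfl⟩, ?_⟩
    rw [← hcomm, hv, hIWfix w hwWh]
  · rintro ⟨v, hvVh, rfl⟩
    exact ⟨hrotVh ⟨v, hvVh, rfl⟩, hdivrot v⟩
end

section
/- Let V be a real vector space and g : V × V → ℝ a symmetric positive semidefinite bilinear form (a semi-inner product). Let K be a subspace of V and Π : V → V a linear map whose range is contained in K, with Π p = p for every p ∈ K, and satisfying g(Π v, Π v) ≤ C² g(v,v) for every v ∈ V, for some constant C > 0. Let T : V × V → ℝ be a bilinear form for which there exist constants 0 < t_* ≤ t^* with t_* g(w,w) ≤ T(w,w) ≤ t^* g(w,w) for every w in the kernel of Π. Then there exist constants c_*, c^* > 0, depending only on C, t_* and t^*, such that for every v ∈ V, c_* g(v,v) ≤ g(Π v, Π v) + T(v − Π v, v − Π v) ≤ c^* g(v,v). -/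
/-- Stability of the projection-based discrete semi-inner product: if `g` is a
symmetric positive semidefinite bilinear form, `Π` is a linear map with range in
the subspace `K`, fixing `K`, bounded with respect to the seminorm induced by
`g` with constant `C`, and the stabilization `T` is spectrally equivalent to `g`
on the kernel of `Π`, then the discrete form
`g(Πv, Πv) + T(v − Πv, v − Πv)` is spectrally equivalent to `g(v,v)` with
constants depending only on `C`, `t_*` and `t^*`. -/
theorem vem_semi_inner_product_stability
    {V : Type*} [AddCommGroup V] [Module ℝ V]
    (g : V →ₗ[ℝ] V →ₗ[ℝ] ℝ)
    (hg_symm : ∀ x y : V, g x y = g y x)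
    (hg_pos : ∀ x : V, 0 ≤ g x x)
    (K : Submodule ℝ V) (Pi : V →ₗ[ℝ] V)
    (hrange : LinearMap.range Pi ≤ K)
    (hproj : ∀ p ∈ K, Pi p = p)
    (C : ℝ) (hC : 0 < C)
    (hbound : ∀ v : V, g (Pi v) (Pi v) ≤ C ^ 2 * g v v)
    (T : V →ₗ[ℝ] V →ₗ[ℝ] ℝ)
    (tStar tSup : ℝ) (ht0 : 0 < tStar) (htt : tStar ≤ tSup)
    (hT : ∀ w ∈ LinearMap.ker Pi,
      tStar * g w w ≤ T w w ∧ T w w ≤ tSup * g w w) :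
    ∃ cStar cSup : ℝ, 0 < cStar ∧ 0 < cSup ∧
      ∀ v : V,
        cStar * g v v ≤ g (Pi v) (Pi v) + T (v - Pi v) (v - Pi v) ∧
        g (Pi v) (Pi v) + T (v - Pi v) (v - Pi v) ≤ cSup * g v v := by

  have hm0 : 0 < min 1 tStar := lt_min one_pos ht0
  refine ⟨min 1 tStar / 2, C ^ 2 + tSup * (2 + 2 * C ^ 2), by linarith,
    by nlinarith, fun v => ?_⟩
  set w := v - Pi v with hw
  have hPiK : Pi v ∈ K := hrange ⟨v, rfl⟩
  have hker : w ∈ LinearMap.ker Pi := by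
    simp [hw, LinearMap.mem_ker, map_sub, hproj _ hPiK]
  obtain ⟨hT1, hT2⟩ := hT w hker
  have hcross : ∀ a b : V, 2 * g a b ≤ g a a + g b b := by
    intro a b
    have h := hg_pos (a - b)
    simp only [map_sub, LinearMap.sub_apply] at h
    have := hg_symm a b
    linarith
  have hv : v = Pi v + w := by simp [hw]
  have hexp : g v v = g (Pi v) (Pi v) + 2 * g (Pi v) w + g w w := by
    conv_lhs => rw [hv]
    simp only [map_add, LinearMap.add_apply]
    have := hg_symm (Pi v) w
    ring_nf
    linarith
  have h1 : g v v ≤ 2 * g (Pi v) (Pi v) + 2 * g w w := by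
    have := hcross (Pi v) w
    linarith
  have hexp2 : g w w = g v v - 2 * g v (Pi v) + g (Pi v) (Pi v) := by
    simp only [hw, map_sub, LinearMap.sub_apply]
    have := hg_symm v (Pi v)
    ring_nf
    linarith
  have h2 : g w w ≤ 2 * g v v + 2 * g (Pi v) (Pi v) := by
    have hneg := hcross v (-(Pi v))
    simp only [map_neg, LinearMap.neg_apply, neg_neg] at hneg
    linarith
  have hb := hbound v
  have hgw := hg_pos w
  have hgP := hg_pos (Pi v)
  have hgv := hg_pos v
  constructor
  · have hm1 : min 1 tStar ≤ 1 := min_le_left _ _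
    have hm2 : min 1 tStar ≤ tStar := min_le_right _ _
    calc min 1 tStar / 2 * g v v
        ≤ min 1 tStar / 2 * (2 * g (Pi v) (Pi v) + 2 * g w w) := by
          apply mul_le_mul_of_nonneg_left h1; positivity
      _ = min 1 tStar * g (Pi v) (Pi v) + min 1 tStar * g w w := by ring
      _ ≤ g (Pi v) (Pi v) + T w w := by
          have : min 1 tStar * g (Pi v) (Pi v) ≤ 1 * g (Pi v) (Pi v) :=
            mul_le_mul_of_nonneg_right hm1 hgP
          have : min 1 tStar * g w w ≤ tStar * g w w :=
            mul_le_mul_of_nonneg_right hm2 hgw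
          nlinarith
  · have : T w w ≤ tSup * (2 * g v v + 2 * g (Pi v) (Pi v)) := by
      refine hT2.trans (mul_le_mul_of_nonneg_left h2 (le_of_lt (ht0.trans_le htt)))
    nlinarith [ht0.trans_le htt]
end
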